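/- Let B¹ be nonnegative irreducible and z with 0 ≪ z ≪ 1 satisfy (−I + (I − Z)B¹)z = 0, Z = diag(z). Let C and Ĉ be nonnegative irreducible matrices with Cz = z and Ĉz = z, and set B² = (I − Z)⁻¹C, B³ = (I − Z)⁻¹Ĉ. Then for all nonnegative scalars α₁, α₂, α₃ with α₁ + α₂ + α₃ = 1, the point (α₁ z, α₂ z, α₃ z) satisfies all three tri-virus equilibrium equations with D^k = I: (−I + (I − α₁Z − α₂Z − α₃Z)B^k)(α_k z) = 0 for k = 1, 2, 3. -/
import Mathlib


open Matrix

/-- A nonnegative matrix is irreducible if for every `(i, j)` some power has a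
strictly positive `(i, j)` entry. -/
def IrredNonneg {n : ℕ} (B : Matrix (Fin n) (Fin n) ℝ) : Prop :=
  (∀ i j, 0 ≤ B i j) ∧ ∀ i j, ∃ k : ℕ, 0 < (B ^ (k + 1)) i j

/-- Plane of coexistence equilibria: with `D^k = I`, `z` the endemic
equilibrium of virus 1, `Cz = z`, `Ĉz = z`, `B² = (I−Z)⁻¹C`, `B³ = (I−Z)⁻¹Ĉ`,
each point `(α₁ z, α₂ z, α₃ z)` with `αᵢ ≥ 0`, `α₁+α₂+α₃ = 1` satisfies all
three tri-virus equilibrium equations. -/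
theorem stmt13 (n : ℕ) (B1 : Matrix (Fin n) (Fin n) ℝ) (hB1 : IrredNonneg B1)
    (z : Fin n → ℝ) (hz : ∀ i, 0 < z i ∧ z i < 1)
    (heqz : (-(1 : Matrix (Fin n) (Fin n) ℝ) +
      ((1 : Matrix (Fin n) (Fin n) ℝ) - Matrix.diagonal z) * B1) *ᵥ z = 0)
    (C Ch : Matrix (Fin n) (Fin n) ℝ) (hC : IrredNonneg C)
    (hCh : IrredNonneg Ch) (hCz : C *ᵥ z = z) (hChz : Ch *ᵥ z = z) :
    ∀ a1 a2 a3 : ℝ, 0 ≤ a1 → 0 ≤ a2 → 0 ≤ a3 → a1 + a2 + a3 = 1 →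
      (-(1 : Matrix (Fin n) (Fin n) ℝ) +
        ((1 : Matrix (Fin n) (Fin n) ℝ) - a1 • Matrix.diagonal z
          - a2 • Matrix.diagonal z - a3 • Matrix.diagonal z) * B1) *ᵥ (a1 • z) = 0 ∧
      (-(1 : Matrix (Fin n) (Fin n) ℝ) +
        ((1 : Matrix (Fin n) (Fin n) ℝ) - a1 • Matrix.diagonal z
          - a2 • Matrix.diagonal z - a3 • Matrix.diagonal z) *
          (((1 : Matrix (Fin n) (Fin n) ℝ) - Matrix.diagonal z)⁻¹ * C)) *ᵥ
        (a2 • z) = 0 ∧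
      (-(1 : Matrix (Fin n) (Fin n) ℝ) +
        ((1 : Matrix (Fin n) (Fin n) ℝ) - a1 • Matrix.diagonal z
          - a2 • Matrix.diagonal z - a3 • Matrix.diagonal z) *
          (((1 : Matrix (Fin n) (Fin n) ℝ) - Matrix.diagonal z)⁻¹ * Ch)) *ᵥ
        (a3 • z) = 0 := by
  intro a1 a2 a3 h1 h2 h3 hsum
  set D := Matrix.diagonal z with hD
  have hDsum : (1 : Matrix (Fin n) (Fin n) ℝ) - a1 • D - a2 • D - a3 • D = 1 - D := by
    rw [sub_sub, sub_sub, ← add_smul, ← add_smul, ← add_assoc, hsum, one_smul]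
  have hdet : ((1 : Matrix (Fin n) (Fin n) ℝ) - D).det ≠ 0 := by
    have : (1 : Matrix (Fin n) (Fin n) ℝ) - D = Matrix.diagonal (fun i => 1 - z i) := by
      rw [hD, ← Matrix.diagonal_one, Matrix.diagonal_sub]
    rw [this, Matrix.det_diagonal]
    exact Finset.prod_ne_zero_iff.2 fun i _ => sub_ne_zero.2 (ne_of_gt (hz i).2)
  have hinv : ((1 : Matrix (Fin n) (Fin n) ℝ) - D) * ((1 : Matrix (Fin n) (Fin n) ℝ) - D)⁻¹ = 1 :=
    Matrix.mul_nonsing_inv _ (isUnit_iff_ne_zero.2 hdet)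
  rw [hDsum]
  refine ⟨?_, ?_, ?_⟩
  · rw [Matrix.mulVec_smul, heqz, smul_zero]
  · rw [← Matrix.mul_assoc, hinv, Matrix.one_mul, Matrix.mulVec_smul,
      Matrix.add_mulVec, Matrix.neg_mulVec, Matrix.one_mulVec, hCz,
      neg_add_cancel, smul_zero]
  · rw [← Matrix.mul_assoc, hinv, Matrix.one_mul, Matrix.mulVec_smul,
      Matrix.add_mulVec, Matrix.neg_mulVec, Matrix.one_mulVec, hChz,
      neg_add_cancel, smul_zero]
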